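/- Let G = (V, E) be a graph on n vertices, and let H be a spanning subgraph of G obtained as follows: H₀ is a subgraph of G that is t-edge-connected, and H = H₀ ∪ ⋃_{S ∈ 𝒮} E_S, where 𝒮 is the set of all vertex subsets S with ∅ ≠ S ≠ V whose cut in H₀ has size less than 2t, and for each S ∈ 𝒮, E_S is a set of min(2t, |E_G(S, V\S)|) edges of G crossing (S, V\S). If G is 2t-edge-connected, then H is 2t-edge-connected. -/
import Mathlib


open Finset
open scoped Classical

/-- Number of edges of `G` crossing the cut `(S, V \ S)`. -/
noncomputable def cutSize {V : Type*} [Fintype V] [DecidableEq V]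
    (G : SimpleGraph V) (S : Finset V) : ℕ :=
  ((S ×ˢ Sᶜ).filter fun p => G.Adj p.1 p.2).card

/-- `G` is `k`-edge-connected: it is connected and every proper nonempty cut has at
least `k` crossing edges. -/
def IsKEdgeConnected {V : Type*} [Fintype V] [DecidableEq V]
    (k : ℕ) (G : SimpleGraph V) : Prop :=
  G.Connected ∧ ∀ S : Finset V, S.Nonempty → S ≠ Finset.univ → k ≤ cutSize G S

lemma cutSize_mono {V : Type*} [Fintype V] [DecidableEq V]
    {G G' : SimpleGraph V} (h : G ≤ G') (S : Finset V) :
    cutSize G S ≤ cutSize G' S := by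
  apply Finset.card_le_card
  intro p hp
  simp only [Finset.mem_filter] at *
  exact ⟨hp.1, h hp.2⟩

/-- Connectivity doubling: if `H₀` is a `t`-edge-connected subgraph of `G`, `𝒮`
collects all proper nonempty cuts of `H₀` of size less than `2t`, and each such cut is
augmented with a set `E_S` of `min(2t, |E_G(S, V\S)|)` crossing edges of `G`, then the
augmented graph is `2t`-edge-connected, provided `G` itself is `2t`-edge-connected. -/
theorem stmt_5 {V : Type*} [Fintype V] [DecidableEq V] [Nonempty V]
    (G H₀ : SimpleGraph V) (t : ℕ) (ht : 1 ≤ t)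
    (hH₀G : H₀ ≤ G) (hH₀ : IsKEdgeConnected t H₀)
    (𝒮 : Finset (Finset V))
    (h𝒮 : ∀ S : Finset V,
      S ∈ 𝒮 ↔ (S.Nonempty ∧ S ≠ Finset.univ ∧ cutSize H₀ S < 2 * t))
    (ES : Finset V → SimpleGraph V)
    (hES : ∀ S ∈ 𝒮, ES S ≤ G ∧ (∀ a b : V, (ES S).Adj a b → ((a ∈ S) ↔ b ∉ S)) ∧
      cutSize (ES S) S = min (2 * t) (cutSize G S))
    (H : SimpleGraph V) (hH : H = H₀ ⊔ ⨆ S ∈ 𝒮, ES S)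
    (hG : IsKEdgeConnected (2 * t) G) :
    IsKEdgeConnected (2 * t) H := by
  constructor
  · exact (hH₀.1).mono (hH ▸ (le_sup_left : H₀ ≤ H₀ ⊔ _))
  · intro S hS hSuniv
    by_cases hc : cutSize H₀ S < 2 * t
    · have hmem : S ∈ 𝒮 := (h𝒮 S).2 ⟨hS, hSuniv, hc⟩
      obtain ⟨hle, -, hcut⟩ := hES S hmem
      have h2 : cutSize (ES S) S = 2 * t := by
        rw [hcut]; exact min_eq_left (hG.2 S hS hSuniv)
      have hESH : ES S ≤ H := by
        rw [hH]
        exact le_sup_of_le_right (le_iSup₂ (f := fun S _ => ES S) S hmem)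
      calc 2 * t = cutSize (ES S) S := h2.symm
        _ ≤ cutSize H S := cutSize_mono hESH S
    · push_neg at hc
      exact hc.trans (cutSize_mono (hH ▸ (le_sup_left : H₀ ≤ H₀ ⊔ _)) S)
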